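/- Let p₁, p₂ be points in the hyperbolic plane ℍ² with d = dist(p₁,p₂) > 0, and let r₁, r₂ ∈ (0, d). Then there exists a unique point p₀ on the geodesic segment between p₁ and p₂ such that cosh(dist(p₀,p₁))/cosh(r₁) = cosh(dist(p₀,p₂))/cosh(r₂). -/
import Mathlib


open Real UpperHalfPlane

open Real UpperHalfPlane

lemma lemVert (q₁ q₂ : ℍ) (h : q₁.re = q₂.re) (t : ℝ) (h0 : 0 ≤ t) (h1 : t ≤ dist q₁ q₂) :
    ∃ q₀ : ℍ, dist q₁ q₀ = t ∧ dist q₀ q₂ = dist q₁ q₂ - t := by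
  rw [UpperHalfPlane.dist_of_re_eq h] at h1
  rcases le_total q₁.im q₂.im with hle | hle
  · set q₀ : ℍ := ⟨⟨q₁.re, q₁.im * Real.exp t⟩, by positivity⟩ with hq₀
    have h01 : q₁.re = q₀.re := rfl
    have h02 : q₀.re = q₂.re := h
    have him : q₀.im = q₁.im * Real.exp t := rfl
    have hlogim : Real.log q₀.im = Real.log q₁.im + t := by
      rw [him, Real.log_mul q₁.im_ne_zero (Real.exp_ne_zero t), Real.log_exp]
    have hlog : Real.log q₁.im ≤ Real.log q₂.im := Real.log_le_log q₁.im_pos hle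
    rw [Real.dist_eq, abs_of_nonpos (by linarith)] at h1
    refine ⟨q₀, ?_, ?_⟩
    · rw [UpperHalfPlane.dist_of_re_eq h01, hlogim, Real.dist_eq,
        abs_of_nonpos (by linarith)]
      ring
    · rw [UpperHalfPlane.dist_of_re_eq h02, UpperHalfPlane.dist_of_re_eq h, hlogim,
        Real.dist_eq, Real.dist_eq, abs_of_nonpos (by linarith), abs_of_nonpos (by linarith)]
      ring
  · set q₀ : ℍ := ⟨⟨q₁.re, q₁.im * Real.exp (-t)⟩, by positivity⟩ with hq₀
    have h01 : q₁.re = q₀.re := rfl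
    have h02 : q₀.re = q₂.re := h
    have him : q₀.im = q₁.im * Real.exp (-t) := rfl
    have hlogim : Real.log q₀.im = Real.log q₁.im - t := by
      rw [him, Real.log_mul q₁.im_ne_zero (Real.exp_ne_zero _), Real.log_exp]
      ring
    have hlog : Real.log q₂.im ≤ Real.log q₁.im := Real.log_le_log q₂.im_pos hle
    rw [Real.dist_eq, abs_of_nonneg (by linarith)] at h1
    refine ⟨q₀, ?_, ?_⟩
    · rw [UpperHalfPlane.dist_of_re_eq h01, hlogim, Real.dist_eq,
        abs_of_nonneg (by linarith)]
      ring
    · rw [UpperHalfPlane.dist_of_re_eq h02, UpperHalfPlane.dist_of_re_eq h, hlogim,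
        Real.dist_eq, Real.dist_eq, abs_of_nonneg (by linarith), abs_of_nonneg (by linarith)]
      ring


noncomputable def Smat : Matrix.SpecialLinearGroup (Fin 2) ℝ :=
  ⟨!![0, -1; 1, 0], by simp [Matrix.det_fin_two_of]⟩

lemma Smat_smul_coe (z : ℍ) : ((Smat • z : ℍ) : ℂ) = -(↑z)⁻¹ := by
  rw [UpperHalfPlane.specialLinearGroup_apply]
  simp [Smat, UpperHalfPlane.coe_mk]
  rw [neg_div, one_div]

lemma Smat_vadd_re (a : ℝ) (z : ℍ) :
    (Smat • (a +ᵥ z) : ℍ).re = -((z.re + a) / ((z.re + a) ^ 2 + z.im ^ 2)) := by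
  have h1 : ((Smat • (a +ᵥ z) : ℍ) : ℂ) = -((a : ℂ) + z)⁻¹ := by
    rw [Smat_smul_coe, UpperHalfPlane.coe_vadd]
  have : (Smat • (a +ᵥ z) : ℍ).re = (-((a : ℂ) + z)⁻¹).re := by
    rw [← UpperHalfPlane.coe_re, h1]
  rw [this, Complex.neg_re, Complex.inv_re, Complex.add_re, Complex.normSq_apply]
  simp [Complex.ofReal_re, UpperHalfPlane.coe_re, Complex.add_im, UpperHalfPlane.coe_im]
  ring_nf

-- straightening
lemma lemC (p₁ p₂ : ℍ) : ∃ (g : Matrix.SpecialLinearGroup (Fin 2) ℝ) (a : ℝ),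
    (g • (a +ᵥ p₁) : ℍ).re = (g • (a +ᵥ p₂) : ℍ).re := by
  by_cases hre : p₁.re = p₂.re
  · exact ⟨1, 0, by simp [hre]⟩
  · set x₁ := p₁.re; set y₁ := p₁.im; set x₂ := p₂.re; set y₂ := p₂.im
    set c : ℝ := (x₁ ^ 2 + y₁ ^ 2 - x₂ ^ 2 - y₂ ^ 2) / (2 * (x₁ - x₂)) with hc
    have hx : x₁ - x₂ ≠ 0 := sub_ne_zero.2 hre
    set ρ : ℝ := Real.sqrt ((x₁ - c) ^ 2 + y₁ ^ 2) with hρ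
    have hρ2 : ρ ^ 2 = (x₁ - c) ^ 2 + y₁ ^ 2 := Real.sq_sqrt (by positivity)
    have hρ2' : ρ ^ 2 = (x₂ - c) ^ 2 + y₂ ^ 2 := by
      rw [hρ2, hc]; field_simp; ring
    have hy₁ : 0 < y₁ := p₁.im_pos
    have hy₂ : 0 < y₂ := p₂.im_pos
    have hρpos : 0 < ρ := Real.sqrt_pos.2 (by positivity)
    have h₁ne : ρ - (x₁ - c) ≠ 0 := by
      intro h
      have : y₁ ^ 2 = 0 := by nlinarith [hρ2]
      nlinarith
    have h₂ne : ρ - (x₂ - c) ≠ 0 := by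
      intro h
      have : y₂ ^ 2 = 0 := by nlinarith [hρ2']
      nlinarith
    refine ⟨Smat, -(c + ρ), ?_⟩
    rw [Smat_vadd_re, Smat_vadd_re]
    have e₁ : (x₁ + -(c + ρ)) ^ 2 + y₁ ^ 2 = 2 * ρ * (ρ - (x₁ - c)) := by nlinarith [hρ2]
    have e₂ : (x₂ + -(c + ρ)) ^ 2 + y₂ ^ 2 = 2 * ρ * (ρ - (x₂ - c)) := by nlinarith [hρ2']
    rw [e₁, e₂]
    have hne1 : 2 * ρ * (ρ - (x₁ - c)) ≠ 0 := by
      have : 0 < 2 * ρ * (ρ - (x₁ - c)) := by nlinarith [e₁]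
      exact this.ne'
    have hne2 : 2 * ρ * (ρ - (x₂ - c)) ≠ 0 := by
      have : 0 < 2 * ρ * (ρ - (x₂ - c)) := by nlinarith [e₂]
      exact this.ne'
    field_simp
    ring

lemma lemB (p₁ p₂ : ℍ) (t : ℝ) (h0 : 0 ≤ t) (h1 : t ≤ dist p₁ p₂) :
    ∃ p₀ : ℍ, dist p₁ p₀ = t ∧ dist p₀ p₂ = dist p₁ p₂ - t := by
  obtain ⟨g, a, hre⟩ := lemC p₁ p₂
  have hiso : ∀ z w : ℍ, dist (g • (a +ᵥ z)) (g • (a +ᵥ w)) = dist z w := fun z w => by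
    rw [dist_smul, (UpperHalfPlane.isometry_real_vadd a).dist_eq]
  have hdist : dist (g • (a +ᵥ p₁)) (g • (a +ᵥ p₂)) = dist p₁ p₂ := hiso p₁ p₂
  obtain ⟨q₀, hq1, hq2⟩ := lemVert _ _ hre t h0 (by rwa [hdist])
  refine ⟨(-a) +ᵥ (g⁻¹ • q₀), ?_, ?_⟩
  · have : g • (a +ᵥ ((-a) +ᵥ (g⁻¹ • q₀))) = q₀ := by
      rw [vadd_vadd]; simp
    rw [← hiso p₁ _, this]; exact hq1
  · have : g • (a +ᵥ ((-a) +ᵥ (g⁻¹ • q₀))) = q₀ := by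
      rw [vadd_vadd]; simp
    rw [← hiso _ p₂, this, hq2, hdist]

-- 1D root lemma
lemma lemA (d r₁ r₂ : ℝ) (hr₁ : r₁ ∈ Set.Ioo 0 d) (hr₂ : r₂ ∈ Set.Ioo 0 d) :
    ∃ t ∈ Set.Ioo 0 d,
      (Real.cosh t * Real.cosh r₂ - Real.cosh (d - t) * Real.cosh r₁ = 0) ∧
      ∀ s ∈ Set.Icc 0 d,
        Real.cosh s * Real.cosh r₂ - Real.cosh (d - s) * Real.cosh r₁ = 0 → s = t := by
  obtain ⟨hr₁0, hr₁d⟩ := hr₁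
  obtain ⟨hr₂0, hr₂d⟩ := hr₂
  have hd : 0 < d := lt_trans hr₁0 hr₁d
  set F : ℝ → ℝ := fun s => Real.cosh s * Real.cosh r₂ - Real.cosh (d - s) * Real.cosh r₁ with hF
  have hcont : Continuous F := by continuity
  have hmono : StrictMonoOn F (Set.Icc 0 d) := by
    intro s hs u hu hsu
    have h1 : Real.cosh s < Real.cosh u := by
      rw [Real.cosh_lt_cosh, abs_of_nonneg hs.1, abs_of_nonneg (hs.1.trans hsu.le)]
      exact hsu
    have h2 : Real.cosh (d - u) ≤ Real.cosh (d - s) := by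
      rw [Real.cosh_le_cosh, abs_of_nonneg (by linarith [hu.2]),
        abs_of_nonneg (by linarith [hs.2, hu.2])]
      linarith
    have hc1 : 0 < Real.cosh r₁ := Real.cosh_pos r₁
    have hc2 : 0 < Real.cosh r₂ := Real.cosh_pos r₂
    simp only [hF]
    nlinarith
  have hF0 : F 0 < 0 := by
    simp only [hF, Real.cosh_zero, one_mul, sub_zero]
    have h1 : Real.cosh r₂ < Real.cosh d := by
      rw [Real.cosh_lt_cosh, abs_of_pos hr₂0, abs_of_pos hd]; exact hr₂d
    have h2 : (1:ℝ) ≤ Real.cosh r₁ := Real.one_le_cosh r₁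
    nlinarith [Real.cosh_pos (x := d)]
  have hFd : 0 < F d := by
    simp only [hF, sub_self, Real.cosh_zero, one_mul]
    have h1 : Real.cosh r₁ < Real.cosh d := by
      rw [Real.cosh_lt_cosh, abs_of_pos hr₁0, abs_of_pos hd]; exact hr₁d
    have h2 : (1:ℝ) ≤ Real.cosh r₂ := Real.one_le_cosh r₂
    nlinarith [Real.cosh_pos (x := d)]
  have hsub : Set.Ioo (F 0) (F d) ⊆ F '' Set.Ioo 0 d :=
    intermediate_value_Ioo hd.le hcont.continuousOn
  obtain ⟨t, ht, hFt⟩ := hsub ⟨hF0, hFd⟩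
  refine ⟨t, ht, hFt, fun s hs hFs => ?_⟩
  have hFs' : F s = 0 := hFs
  exact hmono.injOn hs (Set.mem_Icc_of_Ioo ht) (hFs'.trans hFt.symm)


-- uniqueness of the point at given distances (tangent circles argument)
lemma lemD (p₁ p₂ : ℍ) (t : ℝ) (ht0 : 0 < t) (htd : t < dist p₁ p₂)
    (p q : ℍ)
    (hp1 : dist p₁ p = t) (hp2 : dist p p₂ = dist p₁ p₂ - t)
    (hq1 : dist p₁ q = t) (hq2 : dist q p₂ = dist p₁ p₂ - t) : p = q := by
  set d := dist p₁ p₂ with hd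
  set c₁ : ℂ := (p₁.center t : ℂ) with hc₁
  set c₂ : ℂ := (p₂.center (d - t) : ℂ) with hc₂
  set R₁ : ℝ := p₁.im * Real.sinh t with hR₁
  set R₂ : ℝ := p₂.im * Real.sinh (d - t) with hR₂
  have hR₁0 : 0 < R₁ := mul_pos p₁.im_pos (Real.sinh_pos_iff.2 ht0)
  have hR₂0 : 0 < R₂ := mul_pos p₂.im_pos (Real.sinh_pos_iff.2 (by linarith))
  have hpc₁ : dist (p : ℂ) c₁ = R₁ :=
    UpperHalfPlane.dist_eq_iff_dist_coe_center_eq.1 (by rw [UpperHalfPlane.dist_comm]; exact hp1)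
  have hpc₂ : dist (p : ℂ) c₂ = R₂ :=
    UpperHalfPlane.dist_eq_iff_dist_coe_center_eq.1 hp2
  have hqc₁ : dist (q : ℂ) c₁ = R₁ :=
    UpperHalfPlane.dist_eq_iff_dist_coe_center_eq.1 (by rw [UpperHalfPlane.dist_comm]; exact hq1)
  have hqc₂ : dist (q : ℂ) c₂ = R₂ :=
    UpperHalfPlane.dist_eq_iff_dist_coe_center_eq.1 hq2
  -- dist c₁ c₂ ≤ R₁ + R₂
  have hle : dist c₁ c₂ ≤ R₁ + R₂ := by
    calc dist c₁ c₂ ≤ dist c₁ (p : ℂ) + dist (p : ℂ) c₂ := dist_triangle _ _ _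
    _ = R₁ + R₂ := by rw [dist_comm c₁, hpc₁, hpc₂]
  -- dist c₁ c₂ ≥ R₁ + R₂ : otherwise open balls intersect
  have hge : R₁ + R₂ ≤ dist c₁ c₂ := by
    by_contra hlt
    push_neg at hlt
    -- find x in both open balls
    obtain ⟨x, hx₁, hx₂⟩ : ∃ x : ℂ, dist x c₁ < R₁ ∧ dist x c₂ < R₂ := by
      rcases lt_or_ge (dist c₁ c₂) R₁ with h | h
      · exact ⟨c₂, by rwa [dist_comm c₁ c₂] at h; , by simp [hR₂0]⟩
      rcases lt_or_ge (dist c₁ c₂) R₂ with h' | h'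
      · exact ⟨c₁, by simp [hR₁0], h'⟩
      · set D := dist c₁ c₂ with hD
        have hD0 : 0 < D := lt_of_lt_of_le hR₁0 h
        set s : ℝ := (D + R₁ - R₂) / 2 with hs
        refine ⟨c₁ + (s / D) • (c₂ - c₁), ?_, ?_⟩
        · have : dist (c₁ + (s / D) • (c₂ - c₁)) c₁ = |s / D| * D := by
            rw [dist_eq_norm, add_sub_cancel_left, norm_smul, Real.norm_eq_abs, hD,
              dist_eq_norm c₁ c₂, ← dist_eq_norm, dist_comm c₁ c₂, dist_eq_norm]
          have hs0 : (0:ℝ) ≤ s / D := div_nonneg (by rw [hs]; linarith) hD0.le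
          rw [this, abs_of_nonneg hs0, div_mul_cancel₀ _ hD0.ne']
          rw [hs]; linarith
        · have hkey : c₁ + (s / D) • (c₂ - c₁) - c₂ = (s / D - 1) • (c₂ - c₁) := by
            rw [sub_smul, one_smul]; ring_nf
          have : dist (c₁ + (s / D) • (c₂ - c₁)) c₂ = |s / D - 1| * D := by
            rw [dist_eq_norm, hkey, norm_smul, Real.norm_eq_abs, hD, dist_comm c₁ c₂,
              dist_eq_norm]
          rw [this]
          have hsD : s / D ≤ 1 := by
            rw [div_le_one hD0]; rw [hs]; linarith
          rw [abs_of_nonpos (by linarith), neg_sub, sub_mul, one_mul,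
            div_mul_cancel₀ _ hD0.ne']
          rw [hs]; linarith
    -- lift x to ℍ in both hyperbolic balls
    have hx₁' : x ∈ ((↑) : ℍ → ℂ) '' Metric.ball (α := ℍ) p₁ t := by
      rw [UpperHalfPlane.image_coe_ball]; exact hx₁
    have hx₂' : x ∈ ((↑) : ℍ → ℂ) '' Metric.ball (α := ℍ) p₂ (d - t) := by
      rw [UpperHalfPlane.image_coe_ball]; exact hx₂
    obtain ⟨z, hz, hzx⟩ := hx₁'
    obtain ⟨w, hw, hwx⟩ := hx₂'
    have hzw : z = w := UpperHalfPlane.ext (by rw [hzx, hwx])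
    rw [Metric.mem_ball] at hz hw
    rw [hzw] at hz
    have : d ≤ dist w p₁ + dist w p₂ := by
      rw [UpperHalfPlane.dist_comm w p₁]; exact UpperHalfPlane.dist_triangle p₁ w p₂
    linarith
  have hE : dist c₁ c₂ = R₁ + R₂ := le_antisymm hle hge
  have hE0 : 0 < dist c₁ c₂ := by rw [hE]; positivity
  -- betweenness
  have hwp : Wbtw ℝ c₁ (p : ℂ) c₂ := by
    rw [← dist_add_dist_eq_iff]
    rw [dist_comm c₁, hpc₁, hpc₂, hE]
  have hwq : Wbtw ℝ c₁ (q : ℂ) c₂ := by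
    rw [← dist_add_dist_eq_iff]
    rw [dist_comm c₁, hqc₁, hqc₂, hE]
  obtain ⟨θ, hθ, hθp⟩ := hwp
  obtain ⟨σ, hσ, hσq⟩ := hwq
  have hθd : dist ((p : ℂ)) c₁ = |θ| * dist c₁ c₂ := by
    rw [← hθp, dist_lineMap_left]; rfl
  have hσd : dist ((q : ℂ)) c₁ = |σ| * dist c₁ c₂ := by
    rw [← hσq, dist_lineMap_left]; rfl
  have hθσ : θ = σ := by
    have h1 : |θ| * dist c₁ c₂ = |σ| * dist c₁ c₂ := by rw [← hθd, ← hσd, hpc₁, hqc₁]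
    have h2 : |θ| = |σ| := mul_right_cancel₀ hE0.ne' h1
    rwa [abs_of_nonneg hθ.1, abs_of_nonneg hσ.1] at h2
  apply UpperHalfPlane.ext
  rw [← hθp, ← hσq, hθσ]

/-- On the geodesic segment between two points `p₁, p₂` of the hyperbolic plane at
distance `d > 0`, with `r₁, r₂ ∈ (0, d)`, there is a unique point `p₀` where
`cosh (dist p₀ p₁) / cosh r₁ = cosh (dist p₀ p₂) / cosh r₂`. -/
theorem exists_unique_cosh_ratio_point
    (p₁ p₂ : UpperHalfPlane) (r₁ r₂ : ℝ)
    (hd : 0 < dist p₁ p₂)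
    (hr₁ : r₁ ∈ Set.Ioo 0 (dist p₁ p₂)) (hr₂ : r₂ ∈ Set.Ioo 0 (dist p₁ p₂)) :
    ∃! p₀ : UpperHalfPlane,
      dist p₁ p₀ + dist p₀ p₂ = dist p₁ p₂ ∧
      Real.cosh (dist p₀ p₁) / Real.cosh r₁ =
        Real.cosh (dist p₀ p₂) / Real.cosh r₂ := by
  set d := dist p₁ p₂ with hdd
  obtain ⟨t, ht, hFt, huniq⟩ := lemA d r₁ r₂ hr₁ hr₂
  obtain ⟨p₀, hp₀1, hp₀2⟩ := lemB p₁ p₂ t ht.1.le ht.2.le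
  have hc₁ : (0:ℝ) < Real.cosh r₁ := Real.cosh_pos r₁
  have hc₂ : (0:ℝ) < Real.cosh r₂ := Real.cosh_pos r₂
  refine ⟨p₀, ⟨by rw [hp₀1, hp₀2]; ring, ?_⟩, ?_⟩
  · rw [UpperHalfPlane.dist_comm p₀ p₁, hp₀1, hp₀2, div_eq_div_iff hc₁.ne' hc₂.ne']
    linarith [hFt]
  · rintro q ⟨hqsum, hqratio⟩
    set s := dist p₁ q with hs
    have hs0 : 0 ≤ s := dist_nonneg
    have hsd : s ≤ d := by
      have := dist_nonneg (x := q) (y := p₂); linarith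
    have hq2 : dist q p₂ = d - s := by linarith
    have hFs : Real.cosh s * Real.cosh r₂ - Real.cosh (d - s) * Real.cosh r₁ = 0 := by
      rw [UpperHalfPlane.dist_comm q p₁, ← hs, hq2, div_eq_div_iff hc₁.ne' hc₂.ne'] at hqratio
      linarith
    have hst : s = t := huniq s ⟨hs0, hsd⟩ hFs
    exact lemD p₁ p₂ t ht.1 ht.2 q p₀ (by rw [← hs, hst]) (by rw [hq2, hst])
      hp₀1 hp₀2
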